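/- arXiv:2507.12729 — 11 statements merged into one kernel-verified Lean document; each statement's English description precedes it below -/
import Mathlib

section
/- Fix n₃ ≥ 1 and an orthogonal matrix M ∈ ℝ^{n₃×n₃} (MᵀM = I). Let X be a tensor of size n × 1 × n₃ and A a tensor of size n × n × n₃. Then ⟨X, A ⋆_M X⟩ = ⟨A, X ⋆_M Xᵀ⟩. -/
open Matrix BigOperators Kronecker

noncomputable section

/-- The tubal `⋆_M`-product of tubes `a, b : Fin n₃ → R`:
`a ⋆_M b = M⁻¹ *ᵥ ((M *ᵥ a) ⊙ (M *ᵥ b))`, where `⊙` is the entrywise product. -/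
def tubMul {n₃ : ℕ} {R : Type} [CommRing R] (M : Matrix (Fin n₃) (Fin n₃) R)
    (a b : Fin n₃ → R) : Fin n₃ → R :=
  M⁻¹ *ᵥ ((M *ᵥ a) * (M *ᵥ b))

/-- The tensor `⋆_M`-product of an `ι × κ × n₃` tensor with a `κ × μ × n₃` tensor. -/
def tenMul {n₃ : ℕ} {R : Type} [CommRing R] {ι κ μ : Type} [Fintype κ]
    (M : Matrix (Fin n₃) (Fin n₃) R)
    (A : ι → κ → (Fin n₃ → R)) (B : κ → μ → (Fin n₃ → R)) : ι → μ → (Fin n₃ → R) :=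
  fun i j => ∑ ℓ, tubMul M (A i ℓ) (B ℓ j)

/-- The `⋆_M`-transpose of a tensor. -/
def tenTrans {ι κ γ : Type} (A : ι → κ → γ) : κ → ι → γ := fun i j => A j i

/-- The inner product of two same-size third order tensors. -/
def tenInner {n₃ : ℕ} {ι κ : Type} [Fintype ι] [Fintype κ]
    (A B : ι → κ → (Fin n₃ → ℝ)) : ℝ :=
  ∑ i, ∑ j, ∑ k, A i j k * B i j k

/-- A square tensor is `⋆_M`-positive semidefinite if it is `⋆_M`-symmetric and
`⟨X, A ⋆_M X⟩ ≥ 0` for all `X` of size `n × 1 × n₃`. -/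
def tenPSD {n₃ : ℕ} {ι : Type} [Fintype ι] (M : Matrix (Fin n₃) (Fin n₃) ℝ)
    (A : ι → ι → (Fin n₃ → ℝ)) : Prop :=
  tenTrans A = A ∧ ∀ X : ι → Fin 1 → (Fin n₃ → ℝ), 0 ≤ tenInner X (tenMul M A X)

/-- The multiplicative identity tube `e_M = M⁻¹ 𝟙`. -/
def tubOne {n₃ : ℕ} (M : Matrix (Fin n₃) (Fin n₃) ℝ) : Fin n₃ → ℝ :=
  M⁻¹ *ᵥ (fun _ => 1)

/-- The `⋆_M`-identity tensor. -/
def tenId {n₃ : ℕ} {ι : Type} [DecidableEq ι] (M : Matrix (Fin n₃) (Fin n₃) ℝ) :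
    ι → ι → (Fin n₃ → ℝ) :=
  fun i j => if i = j then tubOne M else 0

/-- The block matricization `mat_M(A)`: the `(i,j)` block is `diag(M *ᵥ A i j)`. -/
def tenMat {n₃ : ℕ} {ι κ : Type} (M : Matrix (Fin n₃) (Fin n₃) ℝ)
    (A : ι → κ → (Fin n₃ → ℝ)) : Matrix (ι × Fin n₃) (κ × Fin n₃) ℝ :=
  Matrix.of fun p q => if p.2 = q.2 then (M *ᵥ A p.1 q.1) p.2 else 0

lemma key_tub_inner {n₃ : ℕ} (M : Matrix (Fin n₃) (Fin n₃) ℝ) (hM : Mᵀ * M = 1)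
    (a b c : Fin n₃ → ℝ) :
    ∑ k, a k * tubMul M b c k = ∑ p, (M *ᵥ a) p * ((M *ᵥ b) p * (M *ᵥ c) p) := by
  have hinv : M⁻¹ = Mᵀ := Matrix.inv_eq_left_inv hM
  have : a ⬝ᵥ (Mᵀ *ᵥ ((M *ᵥ b) * (M *ᵥ c))) = (M *ᵥ a) ⬝ᵥ ((M *ᵥ b) * (M *ᵥ c)) := by
    rw [Matrix.dotProduct_mulVec, Matrix.vecMul_transpose]
  simpa [tubMul, hinv, dotProduct, mul_assoc] using this

/-- For orthogonal `M`, `⟨X, A ⋆_M X⟩ = ⟨A, X ⋆_M Xᵀ⟩`. -/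
theorem inner_tmul_eq_inner_outer (n₃ n : ℕ) (hn₃ : 1 ≤ n₃)
    (M : Matrix (Fin n₃) (Fin n₃) ℝ) (hM : Mᵀ * M = 1)
    (X : Fin n → Fin 1 → (Fin n₃ → ℝ))
    (A : Fin n → Fin n → (Fin n₃ → ℝ)) :
    tenInner X (tenMul M A X) = tenInner A (tenMul M X (tenTrans X)) := by
  simp only [tenInner, tenMul, tenTrans, Finset.sum_apply, Finset.mul_sum]
  calc ∑ i, ∑ j, ∑ k, ∑ ℓ, X i j k * tubMul M (A i ℓ) (X ℓ j) k
      = ∑ i, ∑ j : Fin 1, ∑ ℓ, ∑ k, X i j k * tubMul M (A i ℓ) (X ℓ j) k := by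
        refine Finset.sum_congr rfl fun i _ => Finset.sum_congr rfl fun j _ => Finset.sum_comm ..
    _ = ∑ i, ∑ j : Fin 1, ∑ ℓ, ∑ p, (M *ᵥ X i j) p * ((M *ᵥ A i ℓ) p * (M *ᵥ X ℓ j) p) := by
        simp only [key_tub_inner M hM]
    _ = ∑ i, ∑ ℓ, ∑ j : Fin 1, ∑ p, (M *ᵥ A i ℓ) p * ((M *ᵥ X i j) p * (M *ᵥ X ℓ j) p) := by
        refine Finset.sum_congr rfl fun i _ => ?_
        rw [Finset.sum_comm]
        exact Finset.sum_congr rfl fun ℓ _ => Finset.sum_congr rfl fun j _ =>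
          Finset.sum_congr rfl fun p _ => by ring
    _ = ∑ i, ∑ ℓ, ∑ j : Fin 1, ∑ k, A i ℓ k * tubMul M (X i j) (X ℓ j) k := by
        refine Finset.sum_congr rfl fun i _ => Finset.sum_congr rfl fun ℓ _ =>
          Finset.sum_congr rfl fun j _ => (key_tub_inner M hM _ _ _).symm
    _ = ∑ i, ∑ ℓ, ∑ k, ∑ j : Fin 1, A i ℓ k * tubMul M (X i j) (X ℓ j) k := by
        refine Finset.sum_congr rfl fun i _ => Finset.sum_congr rfl fun ℓ _ => Finset.sum_comm ..

end
end

section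
/- Fix n₃ ≥ 1 and an orthogonal matrix M ∈ ℝ^{n₃×n₃} (MᵀM = I). Let A be a ⋆_M-symmetric tensor of size n × n × n₃. Then A is ⋆_M-positive semidefinite if and only if the n·n₃ × n·n₃ real matrix (Iₙ ⊗ Mᵀ) · mat_M(A) · (Iₙ ⊗ M) is a positive semidefinite matrix. -/
open Matrix BigOperators Kronecker

noncomputable section

/-- A `⋆_M`-symmetric tensor `A` is `⋆_M`-PSD iff the matrix
`(Iₙ ⊗ Mᵀ) · mat_M(A) · (Iₙ ⊗ M)` is positive semidefinite. -/
theorem tenPSD_iff_matrix_representative_posSemidef (n₃ n : ℕ) (hn₃ : 1 ≤ n₃)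
    (M : Matrix (Fin n₃) (Fin n₃) ℝ) (hM : Mᵀ * M = 1)
    (A : Fin n → Fin n → (Fin n₃ → ℝ)) (hA : tenTrans A = A) :
    tenPSD M A ↔
      (((1 : Matrix (Fin n) (Fin n) ℝ) ⊗ₖ Mᵀ) * tenMat M A *
        ((1 : Matrix (Fin n) (Fin n) ℝ) ⊗ₖ M)).PosSemidef := by
  classical
  have hMinv : M⁻¹ = Mᵀ := Matrix.inv_eq_left_inv hM
  set B := ((1 : Matrix (Fin n) (Fin n) ℝ) ⊗ₖ Mᵀ) * tenMat M A *
      ((1 : Matrix (Fin n) (Fin n) ℝ) ⊗ₖ M) with hB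
  -- symmetry of tenMat
  have hMatT : (tenMat M A)ᵀ = tenMat M A := by
    ext p q
    simp only [Matrix.transpose_apply, tenMat, Matrix.of_apply]
    have hAji : A q.1 p.1 = A p.1 q.1 := by
      have := congrFun (congrFun hA q.1) p.1
      simpa [tenTrans] using this.symm
    rw [hAji]
    by_cases h : p.2 = q.2 <;> simp [h, eq_comm]
  have hHerm : B.IsHermitian := by
    have : Bᵀ = B := by
      rw [hB]
      rw [Matrix.transpose_mul, Matrix.transpose_mul, hMatT]
      rw [← Matrix.kroneckerMap_transpose, ← Matrix.kroneckerMap_transpose]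
      simp [Matrix.transpose_one, mul_assoc]
    simpa [Matrix.IsHermitian, Matrix.conjTranspose_eq_transpose_of_trivial] using this
  -- the common quadratic form
  have key2 : ∀ x : Fin n × Fin n₃ → ℝ,
      x ⬝ᵥ B *ᵥ x = ∑ i, ∑ j, ∑ s,
        (M *ᵥ fun k => x (i, k)) s * (M *ᵥ A i j) s * (M *ᵥ fun k => x (j, k)) s := by
    intro x
    have hy : ((1 : Matrix (Fin n) (Fin n) ℝ) ⊗ₖ M) *ᵥ x
        = fun p => (M *ᵥ fun k => x (p.1, k)) p.2 := by
      funext p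
      simp [Matrix.mulVec, dotProduct, Fintype.sum_prod_type,
        Matrix.kroneckerMap_apply, Matrix.one_apply, ite_mul, mulVec]
    rw [hB, Matrix.mul_assoc, ← Matrix.mulVec_mulVec, ← Matrix.mulVec_mulVec,
      Matrix.dotProduct_mulVec, ← Matrix.mulVec_transpose,
      ← Matrix.kroneckerMap_transpose, Matrix.transpose_one, Matrix.transpose_transpose]
    rw [hy]
    simp only [Matrix.mulVec, dotProduct, tenMat, Matrix.of_apply,
      Fintype.sum_prod_type, hy]
    simp only [ite_mul, zero_mul, Finset.sum_ite_eq, Finset.mem_univ, if_true]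
    simp only [Finset.mul_sum]
    refine Finset.sum_congr rfl fun i _ => ?_
    rw [Finset.sum_comm]
    refine Finset.sum_congr rfl fun j _ => ?_
    refine Finset.sum_congr rfl fun s _ => ?_
    refine Finset.sum_congr rfl fun t _ => ?_
    rw [← Finset.mul_sum]
    ring
  have key1 : ∀ X : Fin n → Fin 1 → Fin n₃ → ℝ,
      tenInner X (tenMul M A X) = ∑ i, ∑ j, ∑ s,
        (M *ᵥ X i 0) s * (M *ᵥ A i j) s * (M *ᵥ X j 0) s := by
    intro X
    simp only [tenInner, tenMul, tubMul, hMinv, Fin.sum_univ_one, Finset.sum_apply,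
      Matrix.mulVec, dotProduct, Matrix.transpose_apply, Pi.mul_apply]
    simp only [Finset.mul_sum]
    refine Finset.sum_congr rfl fun i _ => ?_
    rw [Finset.sum_comm]
    refine Finset.sum_congr rfl fun l _ => ?_
    rw [Finset.sum_comm]
    refine Finset.sum_congr rfl fun t _ => ?_
    rw [Finset.sum_comm]
    refine Finset.sum_congr rfl fun e _ => ?_
    conv_rhs => rw [← Finset.mul_sum]
    conv_rhs => rw [mul_assoc, Finset.sum_mul]
    exact Finset.sum_congr rfl fun k _ => by ring
  rw [Matrix.posSemidef_iff_dotProduct_mulVec]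
  constructor
  · rintro ⟨-, h⟩
    refine ⟨hHerm, fun x => ?_⟩
    have := h (fun i _ k => x (i, k))
    rw [key1] at this
    simpa [key2, star] using this
  · rintro ⟨-, h⟩
    refine ⟨hA, fun X => ?_⟩
    have := h (fun p => X p.1 0 p.2)
    rw [key1]
    simpa [key2, star] using this

end
end

section
/- Fix n₃ ≥ 1 and an orthogonal matrix M ∈ ℝ^{n₃×n₃} (MᵀM = I). Let A be a ⋆_M-symmetric tensor of size n × n × n₃ and let Â = A ×₃ M. Then A is ⋆_M-positive semidefinite if and only if for every k ∈ {1,…,n₃} the k-th frontal slice of Â is a positive semidefinite n × n matrix. -/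
open Matrix BigOperators Kronecker

noncomputable section

lemma inner_eq {n₃ n : ℕ} (M : Matrix (Fin n₃) (Fin n₃) ℝ) (hM : Mᵀ * M = 1)
    (A : Fin n → Fin n → (Fin n₃ → ℝ)) (X : Fin n → Fin 1 → (Fin n₃ → ℝ)) :
    tenInner X (tenMul M A X) =
      ∑ k : Fin n₃, ∑ j : Fin 1, ∑ i, ∑ ℓ,
        (M *ᵥ X i j) k * ((M *ᵥ A i ℓ) k * (M *ᵥ X ℓ j) k) := by
  have hinv : M⁻¹ = Mᵀ := Matrix.inv_eq_left_inv hM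
  have key : ∀ (x y : Fin n₃ → ℝ), x ⬝ᵥ (Mᵀ *ᵥ y) = ∑ k, (M *ᵥ x) k * y k := by
    intro x y
    rw [Matrix.dotProduct_mulVec, Matrix.vecMul_transpose]
    rfl
  have L : tenInner X (tenMul M A X) =
      ∑ i, ∑ j : Fin 1, ∑ k, ∑ ℓ,
        (M *ᵥ X i j) k * ((M *ᵥ A i ℓ) k * (M *ᵥ X ℓ j) k) := by
    unfold tenInner tenMul tubMul
    refine Finset.sum_congr rfl fun i _ => Finset.sum_congr rfl fun j _ => ?_
    simp only [hinv, Finset.sum_apply, Finset.mul_sum]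
    rw [Finset.sum_comm]
    rw [show (∑ ℓ, ∑ k, X i j k *
        (Mᵀ *ᵥ ((M *ᵥ A i ℓ) * (M *ᵥ X ℓ j))) k)
      = ∑ ℓ, X i j ⬝ᵥ (Mᵀ *ᵥ ((M *ᵥ A i ℓ) * (M *ᵥ X ℓ j))) from rfl]
    simp only [key, Pi.mul_apply]
    rw [Finset.sum_comm]
  rw [L, Finset.sum_comm]
  conv_rhs => rw [Finset.sum_comm]
  exact Finset.sum_congr rfl fun j _ => Finset.sum_comm

/-- A `⋆_M`-symmetric tensor `A` is `⋆_M`-PSD iff every frontal slice of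
`Â = A ×₃ M` is a positive semidefinite matrix. -/
theorem tenPSD_iff_transform_slices_posSemidef (n₃ n : ℕ) (hn₃ : 1 ≤ n₃)
    (M : Matrix (Fin n₃) (Fin n₃) ℝ) (hM : Mᵀ * M = 1)
    (A : Fin n → Fin n → (Fin n₃ → ℝ)) (hA : tenTrans A = A) :
    tenPSD M A ↔
      ∀ k : Fin n₃, (Matrix.of fun i j : Fin n => (M *ᵥ A i j) k).PosSemidef := by
  have hMMT : M * Mᵀ = 1 := mul_eq_one_comm.mp hM
  have hsymm : ∀ i j, A i j = A j i := fun i j => congrFun (congrFun hA j) i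
  have hquad : ∀ (k : Fin n₃) (v : Fin n → ℝ),
      star v ⬝ᵥ ((Matrix.of fun i j : Fin n => (M *ᵥ A i j) k) *ᵥ v)
        = ∑ i, ∑ ℓ, v i * ((M *ᵥ A i ℓ) k * v ℓ) := by
    intro k v
    simp [dotProduct, Matrix.mulVec, Finset.mul_sum, mul_assoc]
  constructor
  · rintro ⟨-, hpos⟩ k
    refine Matrix.PosSemidef.of_dotProduct_mulVec_nonneg ?_ ?_
    · ext i j
      simp only [Matrix.conjTranspose_apply, Matrix.of_apply, star_trivial]
      rw [hsymm j i]
    · intro x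
      have h := hpos (fun i _ => Mᵀ *ᵥ (fun s => if s = k then x i else 0))
      rw [inner_eq M hM A _] at h
      simp only [Matrix.mulVec_mulVec, hMMT, Matrix.one_mulVec] at h
      rw [hquad k x]
      refine le_trans h (le_of_eq ?_)
      simp [ite_mul, mul_ite, mul_zero, zero_mul, Finset.sum_ite_irrel,
        Finset.sum_const_zero, Finset.sum_ite_eq']
  · rintro hk
    refine ⟨hA, fun X => ?_⟩
    rw [inner_eq M hM A X]
    refine Finset.sum_nonneg fun k _ => Finset.sum_nonneg fun j _ => ?_
    have h := (hk k).dotProduct_mulVec_nonneg (fun i => (M *ᵥ X i j) k)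
    rw [hquad k] at h
    exact h

end
end

section
/- Fix n₃ ≥ 1 and an orthogonal matrix M ∈ ℝ^{n₃×n₃} (MᵀM = I). Let A be an f-diagonal tensor of size n × n × n₃, i.e. A_{i,j} = 0 for all i ≠ j. Then A is ⋆_M-positive semidefinite if and only if for each i ∈ {1,…,n} the diagonal tube A_{i,i} is a square in ℝ_M, i.e. A_{i,i} = x ⋆_M x for some x ∈ ℝ^{n₃}. -/
open Matrix BigOperators Kronecker

noncomputable section

lemma square_iff {n₃ : ℕ} (M : Matrix (Fin n₃) (Fin n₃) ℝ) (hM : Mᵀ * M = 1)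
    (a : Fin n₃ → ℝ) :
    (∃ x, tubMul M x x = a) ↔ ∀ k, 0 ≤ (M *ᵥ a) k := by
  have hinv : M⁻¹ = Mᵀ := Matrix.inv_eq_left_inv hM
  have hMM : M * Mᵀ = 1 := mul_eq_one_comm.mp hM
  constructor
  · rintro ⟨x, rfl⟩ k
    have h1 : M *ᵥ tubMul M x x = (M *ᵥ x) * (M *ᵥ x) := by
      simp [tubMul, hinv, Matrix.mulVec_mulVec, hMM]
    rw [h1]
    exact mul_self_nonneg _
  · intro h
    refine ⟨Mᵀ *ᵥ fun k => Real.sqrt ((M *ᵥ a) k), ?_⟩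
    have h1 : M *ᵥ (Mᵀ *ᵥ (fun k => Real.sqrt ((M *ᵥ a) k)))
        = fun k => Real.sqrt ((M *ᵥ a) k) := by
      rw [Matrix.mulVec_mulVec, hMM, Matrix.one_mulVec]
    rw [tubMul, h1, hinv]
    have h2 : ((fun k => Real.sqrt ((M *ᵥ a) k)) * fun k => Real.sqrt ((M *ᵥ a) k))
        = M *ᵥ a := by
      funext k
      exact Real.mul_self_sqrt (h k)
    rw [h2, Matrix.mulVec_mulVec, hM, Matrix.one_mulVec]

lemma inner_formula {n₃ n : ℕ} (M : Matrix (Fin n₃) (Fin n₃) ℝ) (hM : Mᵀ * M = 1)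
    (A : Fin n → Fin n → (Fin n₃ → ℝ)) (hdiag : ∀ i j : Fin n, i ≠ j → A i j = 0)
    (X : Fin n → Fin 1 → (Fin n₃ → ℝ)) :
    tenInner X (tenMul M A X) = ∑ i, ∑ j, ∑ k, (M *ᵥ A i i) k * ((M *ᵥ X i j) k) ^ 2 := by
  have hinv : M⁻¹ = Mᵀ := Matrix.inv_eq_left_inv hM
  unfold tenInner tenMul
  refine Finset.sum_congr rfl fun i _ => Finset.sum_congr rfl fun j _ => ?_
  have hsum : ∑ ℓ, tubMul M (A i ℓ) (X ℓ j) = tubMul M (A i i) (X i j) := by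
    refine Finset.sum_eq_single i (fun ℓ _ hℓ => ?_)
      (fun h => absurd (Finset.mem_univ i) h)
    rw [hdiag i ℓ (Ne.symm hℓ)]
    simp [tubMul]
  rw [hsum]
  simp only [tubMul, hinv]
  calc ∑ k, X i j k * (Mᵀ *ᵥ ((M *ᵥ A i i) * (M *ᵥ X i j))) k
      = X i j ⬝ᵥ (Mᵀ *ᵥ ((M *ᵥ A i i) * (M *ᵥ X i j))) := rfl
    _ = (M *ᵥ X i j) ⬝ᵥ ((M *ᵥ A i i) * (M *ᵥ X i j)) := by
        rw [Matrix.dotProduct_mulVec, Matrix.vecMul_transpose]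
    _ = ∑ k, (M *ᵥ A i i) k * ((M *ᵥ X i j) k) ^ 2 := by
        simp only [dotProduct, Pi.mul_apply]
        exact Finset.sum_congr rfl fun k _ => by ring

/-- An f-diagonal tensor `A` is `⋆_M`-PSD iff each diagonal tube `A i i`
is a square in `ℝ_M`. -/
theorem fdiagonal_tenPSD_iff_diag_squares (n₃ n : ℕ) (hn₃ : 1 ≤ n₃)
    (M : Matrix (Fin n₃) (Fin n₃) ℝ) (hM : Mᵀ * M = 1)
    (A : Fin n → Fin n → (Fin n₃ → ℝ)) (hdiag : ∀ i j : Fin n, i ≠ j → A i j = 0) :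
    tenPSD M A ↔ ∀ i : Fin n, ∃ x : Fin n₃ → ℝ, tubMul M x x = A i i := by
  have hMM : M * Mᵀ = 1 := mul_eq_one_comm.mp hM
  constructor
  · rintro ⟨_, hpos⟩ i
    rw [square_iff M hM]
    intro k
    obtain ⟨X, hXdef⟩ : ∃ X : Fin n → Fin 1 → Fin n₃ → ℝ,
        X = fun i' _ => if i' = i then Mᵀ *ᵥ Pi.single k 1 else 0 := ⟨_, rfl⟩
    have hX : ∀ (i' : Fin n) (j : Fin 1),
        M *ᵥ X i' j = if i' = i then Pi.single k 1 else 0 := by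
      intro i' j
      by_cases h : i' = i
      · rw [show X i' j = Mᵀ *ᵥ Pi.single k 1 from by simp [hXdef, h]]
        rw [Matrix.mulVec_mulVec, hMM, Matrix.one_mulVec, if_pos h]
      · rw [show X i' j = 0 from by simp [hXdef, h]]
        rw [Matrix.mulVec_zero, if_neg h]
    have hp := hpos X
    rw [inner_formula M hM A hdiag X] at hp
    have hsum : (∑ i', ∑ j : Fin 1, ∑ k', (M *ᵥ A i' i') k' * ((M *ᵥ X i' j) k') ^ 2)
        = (M *ᵥ A i i) k := by
      simp only [hX]
      rw [Finset.sum_eq_single i]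
      · rw [Fin.sum_univ_one, if_pos rfl]
        rw [Finset.sum_eq_single k]
        · simp
        · intro k' _ hk'
          simp [Pi.single_eq_of_ne hk']
        · simp
      · intro i' _ hi'
        simp [hi']
      · simp
    rwa [hsum] at hp
  · intro h
    constructor
    · funext i j
      by_cases hij : i = j
      · subst hij; rfl
      · show A j i = A i j
        rw [hdiag i j hij, hdiag j i fun e => hij e.symm]
    · intro X
      rw [inner_formula M hM A hdiag X]
      refine Finset.sum_nonneg fun i _ => Finset.sum_nonneg fun j _ =>
        Finset.sum_nonneg fun k _ => ?_
      exact mul_nonneg ((square_iff M hM (A i i)).mp (h i) k) (sq_nonneg _)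

end
end

section
/- Fix n₃ ≥ 1 and an orthogonal matrix M ∈ ℝ^{n₃×n₃} (MᵀM = I). Let A be a ⋆_M-positive semidefinite tensor of size n × n × n₃, let λ ∈ ℝ^{n₃} be a tube, and let X be a tensor of size n × 1 × n₃ such that A ⋆_M X = λ ⋆_M X (where λ ⋆_M X denotes the tensor with tubes λ ⋆_M X_{i,1}) and such that for each k ∈ {1,…,n₃} the k-th frontal slice of X ×₃ M is a nonzero vector in ℝⁿ. Then λ is a square in ℝ_M, i.e. λ = x ⋆_M x for some x ∈ ℝ^{n₃}. -/
open Matrix BigOperators Kronecker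

noncomputable section

/-- If `A` is `⋆_M`-PSD, `A ⋆_M X = λ ⋆_M X`, and every frontal slice of
`X ×₃ M` is a nonzero vector, then the eigentube `λ` is a square in `ℝ_M`. -/
theorem eigentube_of_tenPSD_is_square (n₃ n : ℕ) (hn₃ : 1 ≤ n₃)
    (M : Matrix (Fin n₃) (Fin n₃) ℝ) (hM : Mᵀ * M = 1)
    (A : Fin n → Fin n → (Fin n₃ → ℝ)) (hA : tenPSD M A)
    (lam : Fin n₃ → ℝ) (X : Fin n → Fin 1 → (Fin n₃ → ℝ))
    (heig : tenMul M A X = fun i j => tubMul M lam (X i j))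
    (hX : ∀ k : Fin n₃, ∃ i : Fin n, (M *ᵥ X i 0) k ≠ 0) :
    ∃ x : Fin n₃ → ℝ, tubMul M x x = lam := by
  have hMM' : M * Mᵀ = 1 := mul_eq_one_comm.mp hM
  have hInv : M⁻¹ = Mᵀ := Matrix.inv_eq_left_inv hM
  have hMinvM : ∀ v : Fin n₃ → ℝ, M *ᵥ (M⁻¹ *ᵥ v) = v := by
    intro v; rw [Matrix.mulVec_mulVec, hInv, hMM', Matrix.one_mulVec]
  have hMMinv : ∀ v : Fin n₃ → ℝ, M⁻¹ *ᵥ (M *ᵥ v) = v := by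
    intro v; rw [Matrix.mulVec_mulVec, hInv, hM, Matrix.one_mulVec]
  have hdot : ∀ a b : Fin n₃ → ℝ, (M *ᵥ a) ⬝ᵥ (M *ᵥ b) = a ⬝ᵥ b := by
    intro a b
    rw [Matrix.dotProduct_mulVec, ← Matrix.mulVec_transpose, Matrix.mulVec_mulVec, hM,
      Matrix.one_mulVec]
  -- hat of tubMul
  have htub : ∀ a b : Fin n₃ → ℝ, M *ᵥ tubMul M a b = (M *ᵥ a) * (M *ᵥ b) := by
    intro a b; rw [tubMul, hMinvM]
  -- mulVec over sums
  have hsum : ∀ (f : Fin n → (Fin n₃ → ℝ)), M *ᵥ (∑ ℓ, f ℓ) = ∑ ℓ, M *ᵥ f ℓ := by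
    intro f
    ext k
    simp only [Matrix.mulVec, dotProduct, Finset.sum_apply, Finset.mul_sum]
    rw [Finset.sum_comm]
  -- main: each entry of M *ᵥ lam is nonneg
  have key : ∀ k : Fin n₃, 0 ≤ (M *ᵥ lam) k := by
    intro k
    set Y : Fin n → Fin 1 → (Fin n₃ → ℝ) :=
      fun i j => M⁻¹ *ᵥ (fun k' => if k' = k then (M *ᵥ X i j) k' else 0) with hYdef
    have hY : ∀ i j, M *ᵥ Y i j = fun k' => if k' = k then (M *ᵥ X i j) k' else 0 := by
      intro i j; rw [hYdef]; exact hMinvM _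
    -- hat of tenMul M A Y
    have hAY : ∀ (i : Fin n) (j : Fin 1), M *ᵥ (tenMul M A Y i j)
        = fun k' => if k' = k then (M *ᵥ lam) k' * (M *ᵥ X i j) k' else 0 := by
      intro i j
      have h1 : M *ᵥ (tenMul M A Y i j) = ∑ ℓ, (M *ᵥ A i ℓ) * (M *ᵥ Y ℓ j) := by
        rw [tenMul, hsum]
        exact Finset.sum_congr rfl fun ℓ _ => htub _ _
      rw [h1]
      ext k'
      by_cases hk : k' = k
      · subst hk
        have h2 : (∑ ℓ, (M *ᵥ A i ℓ) * (M *ᵥ Y ℓ j)) k'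
            = (∑ ℓ, (M *ᵥ A i ℓ) * (M *ᵥ X ℓ j)) k' := by
          simp only [Finset.sum_apply, Pi.mul_apply, hY]
          simp
        rw [h2]
        have h3 : (∑ ℓ, (M *ᵥ A i ℓ) * (M *ᵥ X ℓ j)) = M *ᵥ (tenMul M A X i j) := by
          rw [tenMul, hsum]
          exact (Finset.sum_congr rfl fun ℓ _ => (htub _ _)).symm
        rw [h3, heig]
        simp [htub]
      · simp only [Finset.sum_apply, Pi.mul_apply, hY, if_neg hk]
        simp
    -- inner product value
    have hinner : tenInner Y (tenMul M A Y)
        = (M *ᵥ lam) k * ∑ i, ((M *ᵥ X i 0) k) ^ 2 := by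
      rw [tenInner]
      have : ∀ (i : Fin n) (j : Fin 1), ∑ k', Y i j k' * tenMul M A Y i j k'
          = (M *ᵥ lam) k * ((M *ᵥ X i j) k) ^ 2 := by
        intro i j
        have hd := hdot (Y i j) (tenMul M A Y i j)
        calc ∑ k', Y i j k' * tenMul M A Y i j k'
            = Y i j ⬝ᵥ tenMul M A Y i j := rfl
          _ = (M *ᵥ Y i j) ⬝ᵥ (M *ᵥ tenMul M A Y i j) := hd.symm
          _ = ∑ k', (M *ᵥ Y i j) k' * (M *ᵥ tenMul M A Y i j) k' := rfl
          _ = (M *ᵥ lam) k * ((M *ᵥ X i j) k) ^ 2 := by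
              rw [hY, hAY, Finset.sum_eq_single k]
              · simp; ring
              · intro b _ hb; simp [hb]
              · simp
      simp only [this, Fin.sum_univ_one]
      exact (Finset.mul_sum _ _ _).symm
    have hpos : 0 < ∑ i, ((M *ᵥ X i 0) k) ^ 2 := by
      obtain ⟨i, hi⟩ := hX k
      have : 0 < ((M *ᵥ X i 0) k) ^ 2 := by positivity
      exact Finset.sum_pos' (fun j _ => sq_nonneg _) ⟨i, Finset.mem_univ i, this⟩
    have h0 := hA.2 Y
    rw [hinner] at h0
    exact le_of_not_gt fun hneg => absurd h0 (not_le.mpr (mul_neg_of_neg_of_pos hneg hpos))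
  -- construct the square root tube
  refine ⟨M⁻¹ *ᵥ (fun k => Real.sqrt ((M *ᵥ lam) k)), ?_⟩
  rw [tubMul, hMinvM]
  have : (fun k => Real.sqrt ((M *ᵥ lam) k)) * (fun k => Real.sqrt ((M *ᵥ lam) k))
      = M *ᵥ lam := by
    ext k
    exact Real.mul_self_sqrt (key k)
  rw [this, hMMinv]

end
end

section
/- Fix n₃ ≥ 1 and an orthogonal matrix M ∈ ℝ^{n₃×n₃} (MᵀM = I). Let C be a ⋆_M-symmetric tensor of size n × n × n₃, and for ℓ ∈ {1,…,L} let A^{(ℓ)} be ⋆_M-symmetric tensors of size n × n × n₃ and b^{(ℓ)} ∈ ℝ. Suppose that for each ℓ there is an index k_ℓ ∈ {1,…,n₃} such that all frontal slices of Â^{(ℓ)} = A^{(ℓ)} ×₃ M other than the k_ℓ-th are zero. For each k ∈ {1,…,n₃}, suppose X^{(k)} is a positive semidefinite real n × n matrix satisfying ⟨Â^{(ℓ)}_{:,:,k_ℓ}, X^{(k)}⟩ = b^{(ℓ)} for every ℓ with k_ℓ = k, and maximizing ⟨Ĉ_{:,:,k}, X⟩ among all positive semidefinite matrices X satisfying those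 constraints. Define the tensor 𝒳 of size n × n × n₃ by requiring that the k-th frontal slice of 𝒳 ×₃ M equals X^{(k)} for all k. Then 𝒳 is ⋆_M-positive semidefinite, satisfies ⟨A^{(ℓ)}, 𝒳⟩ = b^{(ℓ)} for all ℓ ∈ {1,…,L}, and for every ⋆_M-positive semidefinite tensor 𝒴 with ⟨A^{(ℓ)}, 𝒴⟩ = b^{(ℓ)} for all ℓ one has ⟨C, 𝒴⟩ ≤ ⟨C, 𝒳⟩ = Σ_{k=1}^{n₃} ⟨Ĉ_{:,:,k}, X^{(k)}⟩. -/
open Matrix BigOperators Kronecker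

noncomputable section

section Helpers
variable {n₃ : ℕ} {M : Matrix (Fin n₃) (Fin n₃) ℝ}

lemma mulVec_inv_cancel (hM : Mᵀ * M = 1) (v : Fin n₃ → ℝ) :
    M *ᵥ (M⁻¹ *ᵥ v) = v := by
  rw [Matrix.inv_eq_left_inv hM, Matrix.mulVec_mulVec, mul_eq_one_comm.mpr hM,
    Matrix.one_mulVec]

lemma dot_hat (hM : Mᵀ * M = 1) (a b : Fin n₃ → ℝ) :
    ∑ k, (M *ᵥ a) k * (M *ᵥ b) k = ∑ k, a k * b k := by
  have h1 : (M *ᵥ a) ⬝ᵥ (M *ᵥ b) = a ⬝ᵥ b := by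
    rw [Matrix.dotProduct_mulVec, ← Matrix.mulVec_transpose, Matrix.mulVec_mulVec, hM,
      Matrix.one_mulVec]
  simpa [dotProduct] using h1

lemma tenInner_hat (hM : Mᵀ * M = 1) {ι κ : Type} [Fintype ι] [Fintype κ]
    (A B : ι → κ → (Fin n₃ → ℝ)) :
    tenInner A B = ∑ k, ∑ i, ∑ j, (M *ᵥ A i j) k * (M *ᵥ B i j) k := by
  unfold tenInner
  have h1 : ∀ i : ι, ∀ j : κ, ∑ k, A i j k * B i j k
      = ∑ k, (M *ᵥ A i j) k * (M *ᵥ B i j) k := fun i j => (dot_hat hM _ _).symm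
  simp_rw [h1]
  rw [show (∑ i, ∑ j, ∑ k, (M *ᵥ A i j) k * (M *ᵥ B i j) k)
      = ∑ i, ∑ k, ∑ j, (M *ᵥ A i j) k * (M *ᵥ B i j) k from
    Finset.sum_congr rfl fun i _ => Finset.sum_comm]
  exact Finset.sum_comm

lemma hat_tenMul (hM : Mᵀ * M = 1) {ι κ μ : Type} [Fintype κ]
    (Y : ι → κ → (Fin n₃ → ℝ)) (Z : κ → μ → (Fin n₃ → ℝ)) (i : ι) (j : μ) (k : Fin n₃) :
    (M *ᵥ (tenMul M Y Z i j)) k = ∑ ℓ, (M *ᵥ Y i ℓ) k * (M *ᵥ Z ℓ j) k := by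
  unfold tenMul tubMul
  rw [← Matrix.mulVecLin_apply, map_sum]
  simp only [Matrix.mulVecLin_apply, mulVec_inv_cancel hM, Finset.sum_apply, Pi.mul_apply]


lemma slice_psd (hM : Mᵀ * M = 1) {n : ℕ} (Y : Fin n → Fin n → (Fin n₃ → ℝ))
    (hY : tenPSD M Y) (k : Fin n₃) :
    (Matrix.of fun i j => (M *ᵥ Y i j) k).PosSemidef := by
  rw [Matrix.posSemidef_iff_dotProduct_mulVec]
  constructor
  · ext i j
    have h : Y j i = Y i j := congr_fun (congr_fun hY.1 i) j
    simp only [Matrix.conjTranspose_apply, Matrix.of_apply, star_trivial, h]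
  · intro x
    have h0 := hY.2 (fun i _ => M⁻¹ *ᵥ (fun k' => if k' = k then x i else 0))
    rw [tenInner_hat hM] at h0
    simp only [hat_tenMul hM, mulVec_inv_cancel hM] at h0
    have h1 : (∑ k' : Fin n₃, ∑ i : Fin n, ∑ _j : Fin 1,
        (if k' = k then x i else 0) * ∑ ℓ : Fin n, (M *ᵥ Y i ℓ) k' * (if k' = k then x ℓ else 0))
        = ∑ i : Fin n, x i * ∑ ℓ : Fin n, (M *ᵥ Y i ℓ) k * x ℓ := by
      rw [Finset.sum_eq_single k]
      · simp
      · intro k' _ hk'; simp [hk']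
      · simp
    rw [h1] at h0
    simpa [dotProduct, Matrix.mulVec] using h0

end Helpers

/-- If each constraint tensor `A^{(ℓ)}` has a single nonzero frontal slice
`k_ℓ` in the transform domain, then slicewise optimal PSD solutions `X^{(k)}` of the `n₃`
independent matrix SDPs assemble into an optimal solution `𝒳` of the `M`-SDP:
`𝒳` is `⋆_M`-PSD, feasible, optimal, with optimal value `Σ_k ⟨Ĉ_{:,:,k}, X^{(k)}⟩`. -/
theorem MSDP_solved_by_independent_slice_SDPs (n₃ n L : ℕ) (hn₃ : 1 ≤ n₃)
    (M : Matrix (Fin n₃) (Fin n₃) ℝ) (hM : Mᵀ * M = 1)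
    (C : Fin n → Fin n → (Fin n₃ → ℝ)) (hC : tenTrans C = C)
    (A : Fin L → Fin n → Fin n → (Fin n₃ → ℝ)) (hA : ∀ ℓ, tenTrans (A ℓ) = A ℓ)
    (b : Fin L → ℝ) (kk : Fin L → Fin n₃)
    (hsparse : ∀ (ℓ : Fin L) (k : Fin n₃), k ≠ kk ℓ → ∀ i j : Fin n, (M *ᵥ A ℓ i j) k = 0)
    (X : Fin n₃ → Matrix (Fin n) (Fin n) ℝ)
    (hXpsd : ∀ k, (X k).PosSemidef)
    (hXfeas : ∀ ℓ : Fin L, ∑ i, ∑ j, (M *ᵥ A ℓ i j) (kk ℓ) * X (kk ℓ) i j = b ℓ)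
    (hXopt : ∀ (k : Fin n₃) (Y : Matrix (Fin n) (Fin n) ℝ), Y.PosSemidef →
      (∀ ℓ : Fin L, kk ℓ = k → ∑ i, ∑ j, (M *ᵥ A ℓ i j) k * Y i j = b ℓ) →
      ∑ i, ∑ j, (M *ᵥ C i j) k * Y i j ≤ ∑ i, ∑ j, (M *ᵥ C i j) k * X k i j)
    (𝒳 : Fin n → Fin n → (Fin n₃ → ℝ))
    (h𝒳 : ∀ (i j : Fin n) (k : Fin n₃), (M *ᵥ 𝒳 i j) k = X k i j) :
    tenPSD M 𝒳 ∧
    (∀ ℓ : Fin L, tenInner (A ℓ) 𝒳 = b ℓ) ∧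
    (∀ Y : Fin n → Fin n → (Fin n₃ → ℝ), tenPSD M Y →
      (∀ ℓ : Fin L, tenInner (A ℓ) Y = b ℓ) → tenInner C Y ≤ tenInner C 𝒳) ∧
    tenInner C 𝒳 = ∑ k : Fin n₃, ∑ i, ∑ j, (M *ᵥ C i j) k * X k i j := by
  have hfeacoll : ∀ (Y : Fin n → Fin n → (Fin n₃ → ℝ)) (ℓ : Fin L),
      tenInner (A ℓ) Y = ∑ i, ∑ j, (M *ᵥ A ℓ i j) (kk ℓ) * (M *ᵥ Y i j) (kk ℓ) := by
    intro Y ℓ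
    rw [tenInner_hat hM]
    rw [Finset.sum_eq_single (kk ℓ)]
    · intro k _ hk
      apply Finset.sum_eq_zero; intro i _
      apply Finset.sum_eq_zero; intro j _
      rw [hsparse ℓ k hk i j, zero_mul]
    · simp
  refine ⟨⟨?_, ?_⟩, ?_, ?_, ?_⟩
  · -- symmetry of 𝒳
    funext i j
    have hM' : ∀ v : Fin n₃ → ℝ, M⁻¹ *ᵥ (M *ᵥ v) = v := by
      intro v
      rw [Matrix.inv_eq_left_inv hM, Matrix.mulVec_mulVec, hM, Matrix.one_mulVec]
    have hsym : M *ᵥ 𝒳 j i = M *ᵥ 𝒳 i j := by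
      funext k
      rw [h𝒳, h𝒳]
      simpa using (hXpsd k).1.apply i j
    calc tenTrans 𝒳 i j = M⁻¹ *ᵥ (M *ᵥ 𝒳 j i) := (hM' _).symm
    _ = M⁻¹ *ᵥ (M *ᵥ 𝒳 i j) := by rw [hsym]
    _ = 𝒳 i j := hM' _
  · -- nonnegativity of quadratic forms
    intro Xt
    rw [tenInner_hat hM]
    simp only [hat_tenMul hM, h𝒳]
    apply Finset.sum_nonneg; intro k _
    rw [Finset.sum_comm]
    apply Finset.sum_nonneg; intro j _
    have h := (hXpsd k).dotProduct_mulVec_nonneg (fun i => (M *ᵥ Xt i j) k)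
    simpa [dotProduct, Matrix.mulVec] using h
  · -- feasibility
    intro ℓ
    rw [hfeacoll 𝒳 ℓ]
    simp only [h𝒳]
    exact hXfeas ℓ
  · -- optimality
    intro Y hYpsd hYfeas
    rw [tenInner_hat hM, tenInner_hat hM]
    simp only [h𝒳]
    apply Finset.sum_le_sum
    intro k _
    have hk := hXopt k (Matrix.of fun i j => (M *ᵥ Y i j) k) (slice_psd hM Y hYpsd k) ?_
    · simpa using hk
    · intro ℓ hℓ
      have h := hYfeas ℓ
      rw [hfeacoll Y ℓ, hℓ] at h
      simpa using h
  · rw [tenInner_hat hM]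
    simp only [h𝒳]


end
end

section
/- Let 𝔽 be ℝ or ℂ, fix n₃ ≥ 1, let G be a finite group, ρ : G → GL_{n₃}(𝔽) a group homomorphism into invertible n₃ × n₃ matrices, and M ∈ GL_{n₃}(𝔽). Then the following are equivalent: (i) for every tube a ∈ 𝔽^{n₃}, the multiplication map T_a is ρ-equivariant, i.e. a ⋆_M (ρ(g) b) = ρ(g)(a ⋆_M b) for all g ∈ G and b ∈ 𝔽^{n₃}; (ii) for every g ∈ G, the matrix M ρ(g) M⁻¹ is diagonal. -/
open Matrix BigOperators Kronecker

noncomputable section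

/-- For a finite group `G`, a representation `ρ : G → GL_{n₃}(𝔽)`
(`𝔽 = ℝ` or `ℂ`, modelled by `RCLike`), and invertible `M`, every tubal multiplication
map `T_a` is `ρ`-equivariant iff `M ρ(g) M⁻¹` is diagonal for every `g ∈ G`. -/
theorem all_tube_mul_equivariant_iff_diag (n₃ : ℕ) (hn₃ : 1 ≤ n₃)
    {𝕜 : Type} [RCLike 𝕜] (G : Type) [Group G] [Finite G]
    (ρ : G →* (Matrix (Fin n₃) (Fin n₃) 𝕜)ˣ)
    (M : Matrix (Fin n₃) (Fin n₃) 𝕜) (hM : IsUnit M.det) :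
    (∀ (a : Fin n₃ → 𝕜) (g : G) (b : Fin n₃ → 𝕜),
        tubMul M a ((ρ g : Matrix (Fin n₃) (Fin n₃) 𝕜) *ᵥ b)
          = (ρ g : Matrix (Fin n₃) (Fin n₃) 𝕜) *ᵥ tubMul M a b)
      ↔ ∀ g : G, (M * (ρ g : Matrix (Fin n₃) (Fin n₃) 𝕜) * M⁻¹).IsDiag := by
  have hMl : M⁻¹ * M = 1 := Matrix.nonsing_inv_mul M hM
  have hMr : M * M⁻¹ = 1 := Matrix.mul_nonsing_inv M hM
  constructor
  · intro h g i j hij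
    set R := ((ρ g : (Matrix (Fin n₃) (Fin n₃) 𝕜)ˣ) : Matrix (Fin n₃) (Fin n₃) 𝕜) with hR
    have key : ∀ u v : Fin n₃ → 𝕜,
        u * ((M * R * M⁻¹) *ᵥ v) = (M * R * M⁻¹) *ᵥ (u * v) := by
      intro u v
      have h' := h (M⁻¹ *ᵥ u) g (M⁻¹ *ᵥ v)
      unfold tubMul at h'
      rw [Matrix.mulVec_mulVec, hMr, Matrix.one_mulVec, ← hR,
        Matrix.mulVec_mulVec, Matrix.mulVec_mulVec] at h'
      have h2 := congrArg (fun w => M *ᵥ w) h'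
      simp only [Matrix.mulVec_mulVec, hMr, Matrix.one_mulVec, Matrix.mul_assoc] at h2 ⊢
      exact h2
    have hz : (Pi.single i (1:𝕜) : Fin n₃ → 𝕜) * (Pi.single j (1:𝕜) : Fin n₃ → 𝕜) = 0 := by
      funext k
      by_cases hk : k = i
      · subst hk
        simp [Pi.single_eq_of_ne hij]
      · simp [Pi.single_eq_of_ne hk]
    have hkey := congrFun (key (Pi.single i (1:𝕜) : Fin n₃ → 𝕜) (Pi.single j (1:𝕜) : Fin n₃ → 𝕜)) i
    rw [hz, Matrix.mulVec_zero] at hkey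
    simpa [Matrix.mulVec_single, Pi.single_eq_same] using hkey
  · intro h a g b
    set R := ((ρ g : (Matrix (Fin n₃) (Fin n₃) 𝕜)ˣ) : Matrix (Fin n₃) (Fin n₃) 𝕜) with hR
    set P := M * R * M⁻¹ with hP
    have hdiag := h g
    unfold tubMul
    have hMR : M * R = P * M := by
      rw [hP, Matrix.mul_assoc, hMl, Matrix.mul_one]
    have key : ∀ u v : Fin n₃ → 𝕜, u * (P *ᵥ v) = P *ᵥ (u * v) := by
      intro u v
      funext k
      simp only [Pi.mul_apply, Matrix.mulVec, dotProduct, Finset.mul_sum]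
      refine Finset.sum_congr rfl fun l _ => ?_
      by_cases hl : l = k
      · subst hl; ring
      · have hPd : P k l = 0 := hdiag (Ne.symm hl)
        rw [hPd]; ring
    have e1 : M *ᵥ (R *ᵥ b) = P *ᵥ (M *ᵥ b) := by
      rw [Matrix.mulVec_mulVec, Matrix.mulVec_mulVec, hMR]
    rw [e1, key]
    simp only [Matrix.mulVec_mulVec]
    congr 1
    rw [hP, Matrix.mul_assoc M R, ← Matrix.mul_assoc M⁻¹, hMl, Matrix.one_mul]

end
end

section
/- Let 𝔽 be ℝ or ℂ, fix n₃ ≥ 1, let G be a nonabelian finite group, and let ρ : G → GL_{n₃}(𝔽) be a faithful (injective) group homomorphism into invertible n₃ × n₃ matrices. Then for every invertible matrix M ∈ 𝔽^{n₃×n₃} there exists a tube a ∈ 𝔽^{n₃} such that the multiplication map T_a is not ρ-equivariant, i.e. there exist g ∈ G and b ∈ 𝔽^{n₃} with a ⋆_M (ρ(g) b) ≠ ρ(g)(a ⋆_M b). -/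
open Matrix BigOperators Kronecker

noncomputable section

/-- If `G` is a nonabelian finite group and `ρ` is a faithful representation,
then for every invertible `M` some tubal multiplication map `T_a` fails to be
`ρ`-equivariant. -/
theorem nonabelian_faithful_not_all_equivariant (n₃ : ℕ) (hn₃ : 1 ≤ n₃)
    {𝕜 : Type} [RCLike 𝕜] (G : Type) [Group G] [Finite G]
    (hG : ∃ g h : G, g * h ≠ h * g)
    (ρ : G →* (Matrix (Fin n₃) (Fin n₃) 𝕜)ˣ)
    (hρ : Function.Injective ρ) :
    ∀ M : Matrix (Fin n₃) (Fin n₃) 𝕜, IsUnit M.det →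
      ∃ (a : Fin n₃ → 𝕜) (g : G) (b : Fin n₃ → 𝕜),
        tubMul M a ((ρ g : Matrix (Fin n₃) (Fin n₃) 𝕜) *ᵥ b)
          ≠ (ρ g : Matrix (Fin n₃) (Fin n₃) 𝕜) *ᵥ tubMul M a b := by
  intro M hM
  by_contra hc
  push_neg at hc
  obtain ⟨g₀, h₀, hgh⟩ := hG
  have hMinv : M⁻¹ * M = 1 := Matrix.nonsing_inv_mul M hM
  have hMinv' : M * M⁻¹ = 1 := Matrix.mul_nonsing_inv M hM
  set Q : G → Matrix (Fin n₃) (Fin n₃) 𝕜 :=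
    fun g => M * (ρ g : Matrix (Fin n₃) (Fin n₃) 𝕜) * M⁻¹ with hQ
  -- key: Q g commutes with multiplication by any d entrywise
  have key : ∀ (g : G) (d c : Fin n₃ → 𝕜),
      d * (Q g *ᵥ c) = Q g *ᵥ (d * c) := by
    intro g d c
    have h := hc (M⁻¹ *ᵥ d) g (M⁻¹ *ᵥ c)
    unfold tubMul at h
    have hd : M *ᵥ (M⁻¹ *ᵥ d) = d := by
      rw [Matrix.mulVec_mulVec, hMinv', Matrix.one_mulVec]
    rw [hd] at h
    have h2 := congrArg (fun v => M *ᵥ v) h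
    simp only [Matrix.mulVec_mulVec] at h2 ⊢
    rw [hMinv', Matrix.one_mulVec] at h2
    -- h2 : d * (M *ᵥ ρ g *ᵥ M⁻¹ *ᵥ c) = (M * (ρ g * M⁻¹)) *ᵥ (d * ((M * M⁻¹) *ᵥ c))
    simp only [Matrix.mulVec_mulVec, ← Matrix.mul_assoc, hMinv', Matrix.one_mulVec,
      Matrix.one_mul] at h2
    exact h2
  -- Q g is diagonal
  have hdiag : ∀ (g : G) (i j : Fin n₃), i ≠ j → Q g i j = 0 := by
    intro g i j hij
    have h := congrFun (key g (Pi.single i 1 : Fin n₃ → 𝕜) (Pi.single j 1 : Fin n₃ → 𝕜)) i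
    simp only [Pi.mul_apply, Matrix.mulVec_single, Pi.single_eq_same, one_mul] at h
    have hsingle : ((Pi.single i 1 : Fin n₃ → 𝕜) * (Pi.single j 1 : Fin n₃ → 𝕜)) = 0 := by
      ext k
      rcases eq_or_ne k j with rfl | hk
      · simp [Pi.single_eq_of_ne (Ne.symm hij)]
      · simp [Pi.single_eq_of_ne hk]
    rw [hsingle] at h
    simpa [mul_comm] using h
  have hQeq : ∀ g : G, Q g = Matrix.diagonal (fun i => Q g i i) := by
    intro g
    ext i j
    by_cases hij : i = j
    · subst hij; simp [Matrix.diagonal]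
    · simp [Matrix.diagonal, hij, hdiag g i j hij]
  -- Q's commute
  have hQcomm : ∀ g h : G, Q g * Q h = Q h * Q g := by
    intro g h
    rw [hQeq g, hQeq h, Matrix.diagonal_mul_diagonal, Matrix.diagonal_mul_diagonal]
    ext i j
    rcases eq_or_ne i j with rfl | hij
    · simp [Matrix.diagonal_apply_eq, mul_comm]
    · simp [Matrix.diagonal_apply_ne _ hij]
  -- hence ρ's commute
  have hρcomm : (ρ g₀ : Matrix (Fin n₃) (Fin n₃) 𝕜) * (ρ h₀ : Matrix (Fin n₃) (Fin n₃) 𝕜)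
      = (ρ h₀ : Matrix (Fin n₃) (Fin n₃) 𝕜) * (ρ g₀ : Matrix (Fin n₃) (Fin n₃) 𝕜) := by
    have h := hQcomm g₀ h₀
    rw [hQ] at h
    simp only at h
    have h2 := congrArg (fun X => M⁻¹ * X * M) h
    simp only [Matrix.mul_assoc] at h2
    rw [hMinv] at h2
    simp only [← Matrix.mul_assoc, hMinv, Matrix.one_mul] at h2
    simp only [Matrix.mul_assoc, hMinv', Matrix.mul_one] at h2
    exact h2
  have : g₀ * h₀ = h₀ * g₀ := by
    apply hρ
    rw [_root_.map_mul, _root_.map_mul]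
    exact Units.ext (by simpa [Units.val_mul] using hρcomm)
  exact hgh this

end
end

section
/- Fix n₃ ≥ 1, an orthogonal matrix M ∈ ℝ^{n₃×n₃} (MᵀM = I), a finite group G, and a group homomorphism ρ : G → GL_{n₃}(ℝ) such that ρ(g) is orthogonal for every g ∈ G. Let X be a ⋆_M-symmetric tensor of size n × n × n₃ such that for every pair of indices (i,j) and every g ∈ G, the diagonal matrix diag(M X_{i,j}) commutes with M ρ(g) Mᵀ. Let X̂ = (Iₙ ⊗ Mᵀ) · mat_M(X) · (Iₙ ⊗ M). Then for every g ∈ G, (Iₙ ⊗ ρ(g))ᵀ · X̂ · (Iₙ ⊗ ρ(g)) = X̂. -/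
open Matrix BigOperators Kronecker

noncomputable section

lemma key_comm {n₃ n : ℕ} (M : Matrix (Fin n₃) (Fin n₃) ℝ)
    (X : Fin n → Fin n → (Fin n₃ → ℝ)) (N : Matrix (Fin n₃) (Fin n₃) ℝ)
    (h : ∀ i j, Matrix.diagonal (M *ᵥ X i j) * N = N * Matrix.diagonal (M *ᵥ X i j)) :
    tenMat M X * ((1 : Matrix (Fin n) (Fin n) ℝ) ⊗ₖ N)
    = ((1 : Matrix (Fin n) (Fin n) ℝ) ⊗ₖ N) * tenMat M X := by
  ext ⟨i, k⟩ ⟨j, l⟩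
  have h' := congrFun (congrFun (h i j) k) l
  rw [Matrix.diagonal_mul, Matrix.mul_diagonal] at h'
  simp [tenMat, Matrix.mul_apply, Fintype.sum_prod_type, Matrix.one_apply, ite_and,
    Finset.sum_ite_eq, Finset.sum_ite_eq']
  simpa using h'

/-- If the tubes of a `⋆_M`-symmetric tensor `X` satisfy the equivariance
(commutation) condition, then its matrix representative
`X̂ = (Iₙ ⊗ Mᵀ) mat_M(X) (Iₙ ⊗ M)` is invariant: `(Iₙ ⊗ ρ(g))ᵀ X̂ (Iₙ ⊗ ρ(g)) = X̂`. -/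
theorem matrix_representative_invariant (n₃ n : ℕ) (hn₃ : 1 ≤ n₃)
    (M : Matrix (Fin n₃) (Fin n₃) ℝ) (hM : Mᵀ * M = 1)
    (G : Type) [Group G] [Finite G]
    (ρ : G →* (Matrix (Fin n₃) (Fin n₃) ℝ)ˣ)
    (hρ : ∀ g : G, (ρ g : Matrix (Fin n₃) (Fin n₃) ℝ)ᵀ * (ρ g : Matrix (Fin n₃) (Fin n₃) ℝ) = 1)
    (X : Fin n → Fin n → (Fin n₃ → ℝ)) (hX : tenTrans X = X)
    (hcomm : ∀ (i j : Fin n) (g : G),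
      Commute (Matrix.diagonal (M *ᵥ X i j))
        (M * (ρ g : Matrix (Fin n₃) (Fin n₃) ℝ) * Mᵀ)) :
    ∀ g : G,
      ((1 : Matrix (Fin n) (Fin n) ℝ) ⊗ₖ (ρ g : Matrix (Fin n₃) (Fin n₃) ℝ))ᵀ *
          (((1 : Matrix (Fin n) (Fin n) ℝ) ⊗ₖ Mᵀ) * tenMat M X *
            ((1 : Matrix (Fin n) (Fin n) ℝ) ⊗ₖ M)) *
          ((1 : Matrix (Fin n) (Fin n) ℝ) ⊗ₖ (ρ g : Matrix (Fin n₃) (Fin n₃) ℝ))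
        = ((1 : Matrix (Fin n) (Fin n) ℝ) ⊗ₖ Mᵀ) * tenMat M X *
            ((1 : Matrix (Fin n) (Fin n) ℝ) ⊗ₖ M) := by
  intro g
  set ρg := (ρ g : Matrix (Fin n₃) (Fin n₃) ℝ) with hρg
  have hmul : ∀ A B : Matrix (Fin n₃) (Fin n₃) ℝ,
      ((1 : Matrix (Fin n) (Fin n) ℝ) ⊗ₖ A) * (1 ⊗ₖ B) = 1 ⊗ₖ (A * B) := fun A B => by
    rw [← Matrix.mul_kronecker_mul, one_mul]
  have hN := key_comm M X (M * ρg * Mᵀ) (fun i j => hcomm i j g)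
  have hMρ : M * ρg = (M * ρg * Mᵀ) * M := by rw [mul_assoc, hM, mul_one]
  set K := (tenMat M X : Matrix (Fin n × Fin n₃) (Fin n × Fin n₃) ℝ) with hK
  have step : ((1 : Matrix (Fin n) (Fin n) ℝ) ⊗ₖ Mᵀ) * K * (1 ⊗ₖ M) * (1 ⊗ₖ ρg)
      = (1 ⊗ₖ ρg) * (((1 : Matrix (Fin n) (Fin n) ℝ) ⊗ₖ Mᵀ) * K * (1 ⊗ₖ M)) := by
    rw [mul_assoc _ (1 ⊗ₖ M), hmul, hMρ, ← hmul, ← mul_assoc, mul_assoc _ K, hN,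
      ← mul_assoc, hmul, ← mul_assoc, ← mul_assoc, hM, one_mul, ← hmul]
    simp only [mul_assoc]
  have htr : ((1 : Matrix (Fin n) (Fin n) ℝ) ⊗ₖ ρg)ᵀ = 1 ⊗ₖ ρgᵀ := by
    rw [← Matrix.kroneckerMap_transpose, Matrix.transpose_one]
  rw [mul_assoc, step, ← mul_assoc, htr, hmul, hρ g, Matrix.one_kronecker_one, one_mul]

end
end

section
/- Fix n₃ ≥ 1 and an orthogonal matrix M ∈ ℝ^{n₃×n₃} (MᵀM = I). Let B and X be ⋆_M-symmetric tensors of size n × n × n₃, and let B̂ = (Iₙ ⊗ Mᵀ) · mat_M(B) · (Iₙ ⊗ M) and X̂ = (Iₙ ⊗ Mᵀ) · mat_M(X) · (Iₙ ⊗ M) be their matrix representatives. Then ⟨B, X⟩ = trace(B̂ · X̂). -/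
open Matrix BigOperators Kronecker

noncomputable section

/-- For `⋆_M`-symmetric tensors `B, X` with matrix representatives
`B̂ = (Iₙ ⊗ Mᵀ) mat_M(B) (Iₙ ⊗ M)` and `X̂ = (Iₙ ⊗ Mᵀ) mat_M(X) (Iₙ ⊗ M)`,
one has `⟨B, X⟩ = trace(B̂ X̂)`. -/
theorem tenInner_eq_trace_matrix_representatives (n₃ n : ℕ) (hn₃ : 1 ≤ n₃)
    (M : Matrix (Fin n₃) (Fin n₃) ℝ) (hM : Mᵀ * M = 1)
    (B X : Fin n → Fin n → (Fin n₃ → ℝ)) (hB : tenTrans B = B) (hX : tenTrans X = X) :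
    tenInner B X =
      Matrix.trace
        ((((1 : Matrix (Fin n) (Fin n) ℝ) ⊗ₖ Mᵀ) * tenMat M B *
            ((1 : Matrix (Fin n) (Fin n) ℝ) ⊗ₖ M)) *
          (((1 : Matrix (Fin n) (Fin n) ℝ) ⊗ₖ Mᵀ) * tenMat M X *
            ((1 : Matrix (Fin n) (Fin n) ℝ) ⊗ₖ M))) := by
  have hMMt : M * Mᵀ = 1 := mul_eq_one_comm.mp hM
  have key : Matrix.trace
        ((((1 : Matrix (Fin n) (Fin n) ℝ) ⊗ₖ Mᵀ) * tenMat M B *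
            ((1 : Matrix (Fin n) (Fin n) ℝ) ⊗ₖ M)) *
          (((1 : Matrix (Fin n) (Fin n) ℝ) ⊗ₖ Mᵀ) * tenMat M X *
            ((1 : Matrix (Fin n) (Fin n) ℝ) ⊗ₖ M)))
      = Matrix.trace (tenMat M B * tenMat M X) := by
    set P := ((1 : Matrix (Fin n) (Fin n) ℝ) ⊗ₖ Mᵀ) with hP
    set Q := ((1 : Matrix (Fin n) (Fin n) ℝ) ⊗ₖ M) with hQ
    have h1 : Q * P = 1 := by
      rw [hP, hQ, ← Matrix.mul_kronecker_mul, one_mul, hMMt, Matrix.one_kronecker_one]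
    have e : P * tenMat M B * Q * (P * tenMat M X * Q)
        = P * (tenMat M B * tenMat M X) * Q := by
      have : P * tenMat M B * Q * (P * tenMat M X * Q)
          = P * (tenMat M B * ((Q * P) * tenMat M X)) * Q := by
        noncomm_ring
      rw [this, h1, one_mul]
    rw [e, Matrix.trace_mul_cycle, ← Matrix.mul_assoc, h1, one_mul]
  rw [key]
  have htr : Matrix.trace (tenMat M B * tenMat M X)
      = ∑ i : Fin n, ∑ j : Fin n, ∑ k : Fin n₃, (M *ᵥ B i j) k * (M *ᵥ X j i) k := by
    simp only [Matrix.trace, Matrix.diag, Matrix.mul_apply, tenMat, Matrix.of_apply,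
      Fintype.sum_prod_type, ite_mul, zero_mul, mul_ite, mul_zero,
      Finset.sum_ite_eq, Finset.sum_ite_eq', Finset.mem_univ, if_true]
    exact Finset.sum_congr rfl fun i _ => Finset.sum_comm
  rw [htr]
  unfold tenInner
  congr 1; ext i; congr 1; ext j
  have hXij : X j i = X i j := congrFun (congrFun hX i) j
  rw [hXij]
  have hd : ∑ k, (M *ᵥ B i j) k * (M *ᵥ X i j) k
      = (M *ᵥ B i j) ⬝ᵥ (M *ᵥ X i j) := rfl
  rw [hd, Matrix.dotProduct_mulVec, ← Matrix.mulVec_transpose,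
    Matrix.mulVec_mulVec, hM, Matrix.one_mulVec]
  rfl


end
end

section
/- Fix n₃ ≥ 1, an orthogonal matrix M ∈ ℝ^{n₃×n₃} (MᵀM = I), a finite group G, and a group homomorphism ρ : G → GL_{n₃}(ℝ) with ρ(g) orthogonal for every g ∈ G. Let Q be a ⋆_M-symmetric, ⋆_M-positive semidefinite tensor of size m × m × n₃ such that for every pair (i,j) and every g ∈ G the diagonal matrix diag(M Q_{i,j}) commutes with M ρ(g) Mᵀ. Let Q̂ = (Iₘ ⊗ Mᵀ) · mat_M(Q) · (Iₘ ⊗ M) and define the quadratic form f : ℝ^{m n₃} → ℝ by f(v) = vᵀ Q̂ v. Then Q̂ is a positive semidefinite matrix (so f is a nonnegative quadratic form, representable as a sum of squares of linear forms) and f is G-invariant: f((Iₘ ⊗ ρ(g)) v) = f(v) for every g ∈ G and every v ∈ ℝ^{m n₃}. -/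
open Matrix BigOperators Kronecker

noncomputable section

/-- The matrix representative `Q̂ = (Iₘ ⊗ Mᵀ) · mat_M(Q) · (Iₘ ⊗ M)` of a tensor `Q`. -/
def repMat {n₃ m : ℕ} (M : Matrix (Fin n₃) (Fin n₃) ℝ)
    (Q : Fin m → Fin m → (Fin n₃ → ℝ)) :
    Matrix (Fin m × Fin n₃) (Fin m × Fin n₃) ℝ :=
  ((1 : Matrix (Fin m) (Fin m) ℝ) ⊗ₖ Mᵀ) * tenMat M Q *
    ((1 : Matrix (Fin m) (Fin m) ℝ) ⊗ₖ M)

lemma repMat_apply {n₃ m : ℕ} (M : Matrix (Fin n₃) (Fin n₃) ℝ)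
    (Q : Fin m → Fin m → (Fin n₃ → ℝ)) (i j : Fin m) (k l : Fin n₃) :
    repMat M Q (i, k) (j, l) = (Mᵀ * Matrix.diagonal (M *ᵥ Q i j) * M) k l := by
  simp [repMat, tenMat, Matrix.mul_apply, Matrix.one_apply, Fintype.sum_prod_type,
    Matrix.diagonal, ite_and, Finset.sum_ite_eq, Finset.sum_ite_eq']

lemma repMat_mul_kron {n₃ m : ℕ} (M : Matrix (Fin n₃) (Fin n₃) ℝ)
    (Q : Fin m → Fin m → (Fin n₃ → ℝ)) (P : Matrix (Fin n₃) (Fin n₃) ℝ)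
    (i j : Fin m) (k l : Fin n₃) :
    (repMat M Q * ((1 : Matrix (Fin m) (Fin m) ℝ) ⊗ₖ P)) (i, k) (j, l)
      = ((Mᵀ * Matrix.diagonal (M *ᵥ Q i j) * M) * P) k l := by
  simp [Matrix.mul_apply, Fintype.sum_prod_type, Matrix.one_apply, ite_and,
    repMat_apply, Finset.sum_ite_eq, Finset.sum_ite_eq', Finset.sum_mul, Finset.mul_sum]

lemma kron_mul_repMat {n₃ m : ℕ} (M : Matrix (Fin n₃) (Fin n₃) ℝ)
    (Q : Fin m → Fin m → (Fin n₃ → ℝ)) (P : Matrix (Fin n₃) (Fin n₃) ℝ)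
    (i j : Fin m) (k l : Fin n₃) :
    ((((1 : Matrix (Fin m) (Fin m) ℝ) ⊗ₖ P)) * repMat M Q) (i, k) (j, l)
      = (P * (Mᵀ * Matrix.diagonal (M *ᵥ Q i j) * M)) k l := by
  simp [Matrix.mul_apply, Fintype.sum_prod_type, Matrix.one_apply, ite_and,
    repMat_apply, Finset.sum_ite_eq, Finset.sum_ite_eq', Finset.sum_mul, Finset.mul_sum]

lemma repMat_quadform {n₃ m : ℕ} (M : Matrix (Fin n₃) (Fin n₃) ℝ)
    (Q : Fin m → Fin m → (Fin n₃ → ℝ)) (v : Fin m × Fin n₃ → ℝ) :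
    v ⬝ᵥ (repMat M Q *ᵥ v) =
      ∑ i, ∑ j, (fun k => v (i, k)) ⬝ᵥ
        ((Mᵀ * Matrix.diagonal (M *ᵥ Q i j) * M) *ᵥ (fun k => v (j, k))) := by
  rw [show (repMat M Q *ᵥ v) = fun p => ∑ j, ∑ l, repMat M Q p (j, l) * v (j, l) by
    ext p; simp [Matrix.mulVec, dotProduct, Fintype.sum_prod_type]]
  simp only [dotProduct, Matrix.mulVec, Fintype.sum_prod_type, Finset.mul_sum]
  refine Finset.sum_congr rfl fun i _ => ?_
  rw [Finset.sum_comm]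
  refine Finset.sum_congr rfl fun j _ => Finset.sum_congr rfl fun k _ =>
    Finset.sum_congr rfl fun l _ => ?_
  rw [repMat_apply]

lemma quad_eq {n₃ m : ℕ} (M : Matrix (Fin n₃) (Fin n₃) ℝ) (hMinv : M⁻¹ = Mᵀ)
    (Q : Fin m → Fin m → (Fin n₃ → ℝ)) (X : Fin m → Fin 1 → (Fin n₃ → ℝ)) :
    tenInner X (tenMul M Q X) =
      ∑ i, ∑ j, (X i 0) ⬝ᵥ ((Mᵀ * Matrix.diagonal (M *ᵥ Q i j) * M) *ᵥ (X j 0)) := by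
  have hD : ∀ (d w : Fin n₃ → ℝ), Matrix.diagonal d *ᵥ w = d * w :=
    fun d w => funext fun x => Matrix.mulVec_diagonal d w x
  have key : ∀ (i j : Fin m) (o : Fin 1),
      tubMul M (Q i j) (X j o) = (Mᵀ * Matrix.diagonal (M *ᵥ Q i j) * M) *ᵥ (X j o) := by
    intro i j o
    rw [tubMul, hMinv, ← Matrix.mulVec_mulVec, ← Matrix.mulVec_mulVec, hD]
  simp only [tenInner, tenMul, Finset.sum_apply, Finset.mul_sum]
  refine Finset.sum_congr rfl fun i _ => ?_
  rw [Fin.sum_univ_one, Finset.sum_comm]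
  refine Finset.sum_congr rfl fun j _ => ?_
  simp only [key, dotProduct]

/-- If `Q` is a `⋆_M`-symmetric, `⋆_M`-PSD tensor whose tubes satisfy the
equivariance (commutation) condition, then the quadratic form `f(v) = vᵀ Q̂ v` given by the
matrix representative `Q̂ = (Iₘ ⊗ Mᵀ) mat_M(Q) (Iₘ ⊗ M)` is positive semidefinite (hence a
nonnegative quadratic form, a sum of squares of linear forms) and `G`-invariant:
`f((Iₘ ⊗ ρ(g)) v) = f(v)`. -/
theorem invariant_MSOS_quadratic_form (n₃ m : ℕ) (hn₃ : 1 ≤ n₃)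
    (M : Matrix (Fin n₃) (Fin n₃) ℝ) (hM : Mᵀ * M = 1)
    (G : Type) [Group G] [Finite G]
    (ρ : G →* (Matrix (Fin n₃) (Fin n₃) ℝ)ˣ)
    (hρ : ∀ g : G, (ρ g : Matrix (Fin n₃) (Fin n₃) ℝ)ᵀ * (ρ g : Matrix (Fin n₃) (Fin n₃) ℝ) = 1)
    (Q : Fin m → Fin m → (Fin n₃ → ℝ)) (hQsym : tenTrans Q = Q) (hQpsd : tenPSD M Q)
    (hcomm : ∀ (i j : Fin m) (g : G),
      Commute (Matrix.diagonal (M *ᵥ Q i j))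
        (M * (ρ g : Matrix (Fin n₃) (Fin n₃) ℝ) * Mᵀ))
    (f : (Fin m × Fin n₃ → ℝ) → ℝ)
    (hf : ∀ v : Fin m × Fin n₃ → ℝ, f v = v ⬝ᵥ (repMat M Q *ᵥ v)) :
    (repMat M Q).PosSemidef ∧
    (∀ v : Fin m × Fin n₃ → ℝ, 0 ≤ f v) ∧
    (∀ (g : G) (v : Fin m × Fin n₃ → ℝ),
      f (((1 : Matrix (Fin m) (Fin m) ℝ) ⊗ₖ (ρ g : Matrix (Fin n₃) (Fin n₃) ℝ)) *ᵥ v) = f v) := by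
  have hMinv : M⁻¹ = Mᵀ := Matrix.inv_eq_left_inv hM
  -- nonnegativity of the quadratic form
  have quad : ∀ v : Fin m × Fin n₃ → ℝ, v ⬝ᵥ (repMat M Q *ᵥ v) =
      tenInner (fun i (_ : Fin 1) k => v (i, k)) (tenMul M Q (fun i (_ : Fin 1) k => v (i, k))) := by
    intro v
    rw [repMat_quadform, quad_eq M hMinv Q (fun i _ k => v (i, k))]
  have hnonneg : ∀ v : Fin m × Fin n₃ → ℝ, 0 ≤ v ⬝ᵥ (repMat M Q *ᵥ v) := by
    intro v; rw [quad v]; exact hQpsd.2 _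
  -- symmetry
  have hsym2 : ∀ i j : Fin m, (Mᵀ * Matrix.diagonal (M *ᵥ Q i j) * M)ᵀ =
      Mᵀ * Matrix.diagonal (M *ᵥ Q i j) * M := by
    intro i j
    simp [Matrix.transpose_mul, Matrix.diagonal_transpose, Matrix.mul_assoc]
  have herm : (repMat M Q).IsHermitian := by
    refine Matrix.ext fun p q => ?_
    obtain ⟨j, l⟩ := p; obtain ⟨i, k⟩ := q
    rw [Matrix.conjTranspose_apply, star_trivial, repMat_apply, repMat_apply]
    have hQ : Q i j = Q j i := (congrFun (congrFun hQsym i) j).symm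
    rw [hQ]
    conv_lhs => rw [← hsym2 j i]
    rfl
  refine ⟨Matrix.PosSemidef.of_dotProduct_mulVec_nonneg herm (fun x => by simpa using hnonneg x),
    fun v => by rw [hf]; exact hnonneg v, ?_⟩
  -- G-invariance
  intro g v
  set P : Matrix (Fin n₃) (Fin n₃) ℝ := (ρ g : Matrix (Fin n₃) (Fin n₃) ℝ) with hP
  set R : Matrix (Fin m × Fin n₃) (Fin m × Fin n₃) ℝ :=
    (1 : Matrix (Fin m) (Fin m) ℝ) ⊗ₖ P with hR
  have hblock : ∀ i j : Fin m,
      (Mᵀ * Matrix.diagonal (M *ᵥ Q i j) * M) * P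
        = P * (Mᵀ * Matrix.diagonal (M *ᵥ Q i j) * M) := by
    intro i j
    set D := Matrix.diagonal (M *ᵥ Q i j) with hD
    have hc : D * (M * P * Mᵀ) = (M * P * Mᵀ) * D := (hcomm i j g).eq
    have e1 : Mᵀ * (D * (M * P * Mᵀ)) * M = Mᵀ * D * M * P := by
      calc Mᵀ * (D * (M * P * Mᵀ)) * M = Mᵀ * D * M * P * (Mᵀ * M) := by noncomm_ring
        _ = Mᵀ * D * M * P := by rw [hM, Matrix.mul_one]
    have e2 : Mᵀ * ((M * P * Mᵀ) * D) * M = P * (Mᵀ * D * M) := by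
      calc Mᵀ * ((M * P * Mᵀ) * D) * M = (Mᵀ * M) * (P * (Mᵀ * D * M)) := by noncomm_ring
        _ = P * (Mᵀ * D * M) := by rw [hM, Matrix.one_mul]
    rw [← e1, hc, e2]
  have hcommR : repMat M Q * R = R * repMat M Q := by
    refine Matrix.ext fun p q => ?_
    obtain ⟨i, k⟩ := p; obtain ⟨j, l⟩ := q
    rw [hR, repMat_mul_kron, kron_mul_repMat, hblock]
  have hRt : Rᵀ = (1 : Matrix (Fin m) (Fin m) ℝ) ⊗ₖ Pᵀ := by
    rw [hR, ← Matrix.kroneckerMap_transpose, Matrix.transpose_one]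
  have hRtR : Rᵀ * R = 1 := by
    rw [hRt, hR, ← Matrix.mul_kronecker_mul, Matrix.one_mul, hρ g, Matrix.one_kronecker_one]
  calc f (R *ᵥ v) = (R *ᵥ v) ⬝ᵥ (repMat M Q *ᵥ (R *ᵥ v)) := hf _
    _ = (R *ᵥ v) ⬝ᵥ (R *ᵥ (repMat M Q *ᵥ v)) := by
        rw [Matrix.mulVec_mulVec, hcommR, ← Matrix.mulVec_mulVec]
    _ = ((R *ᵥ v) ᵥ* R) ⬝ᵥ (repMat M Q *ᵥ v) := by rw [Matrix.dotProduct_mulVec]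
    _ = v ⬝ᵥ (repMat M Q *ᵥ v) := by
        rw [← Matrix.mulVec_transpose, Matrix.mulVec_mulVec, hRtR, Matrix.one_mulVec]
    _ = f v := (hf v).symm

end
end
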